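/- In D_n', there is no induced directed cycle of odd length at least 5. -/

import Mathlib

/-- Vertex set of the digraph `D (n+1)` from the paper (`Vtx n` = vertices of `D_{n+1}`). -/
def Vtx : ℕ → Type
  | 0 => Unit
  | (n+1) => (Fin (n+1) × Vtx n) ⊕ ((i : Fin (n+1)) → Vtx n)

/-- Edge relation of `D_{n+1}`. -/
def DEdge : (n : ℕ) → Vtx n → Vtx n → Prop
  | 0, _, _ => False
  | (n+1), Sum.inl (i, x), Sum.inl (j, y) => i = j ∧ DEdge n x y
  | (n+1), Sum.inl (i, x), Sum.inr T => T i = x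
  | (_+1), Sum.inr _, _ => False

/-- There is a directed walk of length `k` from `u` to `v`. -/
def WalkLen {V : Type*} (E : V → V → Prop) (u v : V) (k : ℕ) : Prop :=
  ∃ f : Fin (k+1) → V, f 0 = u ∧ f (Fin.last k) = v ∧
    ∀ i : Fin k, E (f i.castSucc) (f i.succ)

/-- `l` is a directed path (as a list of distinct vertices) from `u` to `v`. -/
def IsDPath {V : Type*} (E : V → V → Prop) (u v : V) (l : List V) : Prop :=
  l.Chain' E ∧ l.Nodup ∧ l.head? = some u ∧ l.getLast? = some v

/-- Positive edges of `D'`. -/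
def PosE {V : Type*} (E : V → V → Prop) (u v : V) : Prop :=
  ∃ k, k % 3 = 1 ∧ WalkLen E u v k

/-- Negative edges of `D'`. -/
def NegE {V : Type*} (E : V → V → Prop) (u v : V) : Prop :=
  ∃ k, k % 3 = 2 ∧ WalkLen E v u k

/-- Edge relation of `D_{n+1}'`. -/
def DEdge' (n : ℕ) (u v : Vtx n) : Prop :=
  PosE (DEdge n) u v ∨ NegE (DEdge n) u v

/-- Underlying undirected graph of a digraph. -/
def underSG {V : Type*} (E : V → V → Prop) : SimpleGraph V :=
  SimpleGraph.fromRel E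

/-- `G_{n+1}`, the underlying undirected graph of `D_{n+1}'`. -/
def Gn (n : ℕ) : SimpleGraph (Vtx n) := underSG (DEdge' n)

/-- A digraph is acyclic iff no vertex lies on a directed cycle. -/
def DAcyclic {V : Type*} (E : V → V → Prop) : Prop :=
  ∀ v : V, ¬ Relation.TransGen E v v

/-- `k`-dicolorability. -/
def Dicolorable {V : Type*} (E : V → V → Prop) (k : ℕ) : Prop :=
  ∃ f : V → Fin k, ∀ c : Fin k,
    DAcyclic (fun a b => E a b ∧ f a = c ∧ f b = c)

/-- `D` has an induced directed cycle of odd length at least 5. -/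
def HasInducedOddCycle {V : Type*} (E : V → V → Prop) : Prop :=
  ∃ m : ℕ, 5 ≤ m ∧ Odd m ∧ ∃ f : ZMod m → V, Function.Injective f ∧
    (∀ i, E (f i) (f (i+1))) ∧ (∀ i j, E (f i) (f j) → j = i + 1)
section
variable {V : Type*} {E : V → V → Prop}

lemma walklen_zero {u v : V} : WalkLen E u v 0 ↔ u = v := by
  constructor
  · rintro ⟨f, h0, hl, _⟩
    rw [← h0, ← hl]
    congr 1
  · rintro rfl
    exact ⟨fun _ => u, rfl, rfl, fun i => i.elim0⟩

lemma walklen_succ {u v : V} {k : ℕ} :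
    WalkLen E u v (k+1) ↔ ∃ w, E u w ∧ WalkLen E w v k := by
  constructor
  · rintro ⟨f, h0, hl, hc⟩
    refine ⟨f 1, ?_, fun i => f i.succ, rfl, ?_, ?_⟩
    · simpa [h0] using hc 0
    · show f (Fin.last k).succ = v
      rw [Fin.succ_last, hl]
    · intro i
      have := hc i.succ
      rwa [← Fin.succ_castSucc] at this
  · rintro ⟨w, hE, f, h0, hl, hc⟩
    refine ⟨Fin.cases u f, by simp, ?_, ?_⟩
    · show Fin.cases u f (Fin.last (k+1)) = v
      rw [← Fin.succ_last]
      simpa only [Fin.cases_succ] using hl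
    · intro i
      induction i using Fin.cases with
      | zero =>
        show E (Fin.cases u f (Fin.castSucc 0)) (Fin.cases u f (Fin.succ 0))
        rw [Fin.castSucc_zero, Fin.cases_zero, Fin.cases_succ, h0]
        exact hE
      | succ j =>
        have := hc j
        simpa [← Fin.succ_castSucc] using this

lemma walklen_trans {u v w : V} {k1 k2 : ℕ} (h1 : WalkLen E u v k1)
    (h2 : WalkLen E v w k2) : WalkLen E u w (k1 + k2) := by
  induction k1 generalizing u with
  | zero => rw [walklen_zero] at h1; subst h1; simpa using h2
  | succ k ih =>
    rw [walklen_succ] at h1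
    obtain ⟨x, hE, hx⟩ := h1
    rw [show k + 1 + k2 = (k + k2) + 1 by omega, walklen_succ]
    exact ⟨x, hE, ih hx⟩

end

section
variable {V : Type*} {E : V → V → Prop}

theorem Dn'_no_induced_odd_cycle' (E' : V → V → Prop)
    (hE' : ∀ u v, E' u v ↔ PosE E u v ∨ NegE E u v) :
    ¬ HasInducedOddCycle E' := by
  classical
  rintro ⟨m, hm, hodd, f, hinj, hcyc, hind⟩
  haveI : NeZero m := ⟨by omega⟩
  let s : ZMod m → Bool := fun i => decide (PosE E (f i) (f (i+1)))
  have hsame : ∃ i : ZMod m, s i = s (i+1) := by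
    by_contra h
    push_neg at h
    have halt : ∀ i, s (i+1) = !s i := by
      intro i
      have hne := h i
      cases hb : s i <;> cases hb2 : s (i+1) <;> simp_all
    have key : ∀ k : ℕ, s (k : ZMod m) = if Even k then s 0 else !s 0 := by
      intro k
      induction k with
      | zero => simp
      | succ k ih =>
        push_cast
        rw [halt, ih]
        by_cases hk : Even k <;> simp [hk, Nat.even_add_one]
    have hm0 := key m
    rw [ZMod.natCast_self, if_neg (Nat.not_even_iff_odd.2 hodd)] at hm0
    revert hm0; cases s 0 <;> simp
  obtain ⟨i, hi⟩ := hsame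
  have h1 := (hE' _ _).1 (hcyc i)
  have h2 := (hE' _ _).1 (hcyc (i+1))
  rw [show i + 1 + 1 = i + 2 by ring] at h2
  have chord : E' (f (i+2)) (f i) := by
    rw [hE']
    cases hs : s i with
    | true =>
      have hp1 : PosE E (f i) (f (i+1)) := of_decide_eq_true hs
      have hp2 : PosE E (f (i+1)) (f (i+2)) := by
        have := hi; rw [hs] at this
        have := of_decide_eq_true this.symm
        rwa [show i + 1 + 1 = i + 2 by ring] at this
      obtain ⟨k1, hk1, w1⟩ := hp1
      obtain ⟨k2, hk2, w2⟩ := hp2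
      exact Or.inr ⟨k1 + k2, by omega, walklen_trans w1 w2⟩
    | false =>
      have hn1 : NegE E (f i) (f (i+1)) := by
        rcases h1 with h | h
        · exfalso
          have ht : s i = true := decide_eq_true h
          rw [hs] at ht
          exact Bool.false_ne_true ht
        · exact h
      have hn2 : NegE E (f (i+1)) (f (i+2)) := by
        rcases h2 with h | h
        · exfalso
          have : s (i+1) = true := by
            apply decide_eq_true
            rwa [show i + 1 + 1 = i + 2 by ring]
          rw [← hi, hs] at this
          simp at this
        · exact h
      obtain ⟨k1, hk1, w1⟩ := hn1
      obtain ⟨k2, hk2, w2⟩ := hn2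
      exact Or.inl ⟨k2 + k1, by omega, walklen_trans w2 w1⟩
  have e := hind (i+2) i chord
  rw [add_assoc] at e
  have h3 : (2 + 1 : ZMod m) = 0 := left_eq_add.mp e
  have h3' : ((3 : ℕ) : ZMod m) = 0 := by push_cast; linear_combination h3
  rw [ZMod.natCast_eq_zero_iff] at h3'
  have := Nat.le_of_dvd (by norm_num) h3'
  omega

end

/-- `D_n'` has no induced directed cycle of odd length at least 5. -/
theorem Dn'_no_induced_odd_cycle (n : ℕ) : ¬ HasInducedOddCycle (DEdge' n) :=
  Dn'_no_induced_odd_cycle' (DEdge' n) (fun _ _ => Iff.rfl)
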